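/- (Hertling's equality for Brieskorn–Pham polynomials.) Let n ≥ 1 and let a₁, …, aₙ be integers with each aᵢ ≥ 2. Consider the μ := Π_{i=1}^{n}(aᵢ−1) real numbers α_k := Σ_{i=1}^{n} kᵢ/aᵢ, indexed by tuples k = (k₁,…,kₙ) with 1 ≤ kᵢ ≤ aᵢ−1. Then their mean equals n/2, the minimum is Σᵢ 1/aᵢ, the maximum is Σᵢ (aᵢ−1)/aᵢ, and (1/μ)·Σ_k (α_k − n/2)² = (1/12)·(Σᵢ (aᵢ−1)/aᵢ − Σᵢ 1/aᵢ); that is, the variance of the spectral numbers equals exactly (1/12)(α_max − α_min). -/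

import Mathlib

private lemma sumIcc1 (m : ℕ) : ∑ x ∈ Finset.Icc 1 m, (x : ℝ) = m * (m + 1) / 2 := by
  induction m with
  | zero => simp
  | succ m ih =>
    rw [Finset.sum_Icc_succ_top (by omega), ih]
    push_cast
    ring

private lemma sumIcc2 (m : ℕ) : ∑ x ∈ Finset.Icc 1 m, (x : ℝ) ^ 2 = m * (m + 1) * (2 * m + 1) / 6 := by
  induction m with
  | zero => simp
  | succ m ih =>
    rw [Finset.sum_Icc_succ_top (by omega), ih]
    push_cast
    ring

private lemma hmcast {a : ℕ} (ha : 2 ≤ a) : ((a - 1 : ℕ) : ℝ) = (a : ℝ) - 1 := by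
  rw [Nat.cast_sub (by omega)]; simp

private lemma cardIcc {a : ℕ} (ha : 2 ≤ a) : (Finset.Icc 1 (a - 1)).card = a - 1 := by
  rw [Nat.card_Icc]; omega

private lemma sum_div_a {a : ℕ} (ha : 2 ≤ a) :
    ∑ x ∈ Finset.Icc 1 (a - 1), (x : ℝ) / a = ((a : ℝ) - 1) / 2 := by
  have h0 : (a : ℝ) ≠ 0 := by
    have : (0 : ℝ) < a := by exact_mod_cast (by omega : 0 < a)
    linarith
  rw [← Finset.sum_div, sumIcc1, hmcast ha]
  field_simp
  ring

private lemma beta_sum_zero {a : ℕ} (ha : 2 ≤ a) :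
    ∑ x ∈ Finset.Icc 1 (a - 1), ((x : ℝ) / a - 1 / 2) = 0 := by
  have h0 : (a : ℝ) ≠ 0 := by
    have : (0 : ℝ) < a := by exact_mod_cast (by omega : 0 < a)
    linarith
  rw [Finset.sum_sub_distrib, sum_div_a ha, Finset.sum_const, cardIcc ha, nsmul_eq_mul,
    hmcast ha]
  ring

private lemma beta_sq_sum {a : ℕ} (ha : 2 ≤ a) :
    ∑ x ∈ Finset.Icc 1 (a - 1), ((x : ℝ) / a - 1 / 2) ^ 2
      = ((a : ℝ) - 1) * ((a : ℝ) - 2) / (12 * a) := by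
  have h0 : (a : ℝ) ≠ 0 := by
    have : (0 : ℝ) < a := by exact_mod_cast (by omega : 0 < a)
    linarith
  have expand : ∀ x : ℕ, ((x : ℝ) / a - 1 / 2) ^ 2
      = (x : ℝ) ^ 2 * (1 / (a : ℝ) ^ 2) - (x : ℝ) * (1 / a) + 1 / 4 := by
    intro x; field_simp; ring
  rw [Finset.sum_congr rfl fun x _ => expand x, Finset.sum_add_distrib,
    Finset.sum_sub_distrib, ← Finset.sum_mul, ← Finset.sum_mul, sumIcc1, sumIcc2,
    Finset.sum_const, cardIcc ha, nsmul_eq_mul, hmcast ha]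
  field_simp
  ring

private lemma sum_pi_single {n : ℕ} (t : Fin n → Finset ℕ) (i : Fin n) (f : ℕ → ℝ) :
    ∑ k ∈ Fintype.piFinset t, f (k i)
      = (∑ x ∈ t i, f x) * ∏ j ∈ Finset.univ.erase i, ((t j).card : ℝ) := by
  calc ∑ k ∈ Fintype.piFinset t, f (k i)
      = ∑ k ∈ Fintype.piFinset t, ∏ j, (if j = i then f (k j) else (1 : ℝ)) := by
        refine Finset.sum_congr rfl fun k _ => ?_
        rw [Finset.prod_ite_eq', if_pos (Finset.mem_univ i)]
    _ = ∏ j, ∑ x ∈ t j, (if j = i then f x else (1 : ℝ)) :=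
        (Finset.prod_univ_sum t fun j x => if j = i then f x else (1 : ℝ)).symm
    _ = (∑ x ∈ t i, f x) * ∏ j ∈ Finset.univ.erase i, ((t j).card : ℝ) := by
        rw [← Finset.mul_prod_erase Finset.univ _ (Finset.mem_univ i)]
        congr 1
        · simp
        · refine Finset.prod_congr rfl fun j hj => ?_
          have hji : j ≠ i := Finset.ne_of_mem_erase hj
          simp [hji]

private lemma sum_pi_two_zero {n : ℕ} (t : Fin n → Finset ℕ) {i j : Fin n} (hij : j ≠ i)
    (f g : ℕ → ℝ) (hf : ∑ x ∈ t i, f x = 0) :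
    ∑ k ∈ Fintype.piFinset t, f (k i) * g (k j) = 0 := by
  have key : ∀ k : Fin n → ℕ,
      f (k i) * g (k j) = ∏ l, (if l = i then f (k l) else if l = j then g (k l) else (1 : ℝ)) := by
    intro k
    rw [← Finset.mul_prod_erase Finset.univ _ (Finset.mem_univ i), if_pos rfl]
    have hj' : j ∈ Finset.univ.erase i := Finset.mem_erase.2 ⟨hij, Finset.mem_univ j⟩
    rw [← Finset.mul_prod_erase _ _ hj', if_neg hij, if_pos rfl]
    rw [Finset.prod_eq_one fun l hl => by
      have h1 : l ≠ j := (Finset.mem_erase.1 hl).1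
      have h2 : l ≠ i := (Finset.mem_erase.1 (Finset.mem_erase.1 hl).2).1
      simp [h1, h2]]
    ring
  rw [Finset.sum_congr rfl fun k _ => key k]
  have h := Finset.prod_univ_sum t
    (fun l x => if l = i then f x else if l = j then g x else (1 : ℝ))
  calc (∑ k ∈ Fintype.piFinset t, ∏ l, if l = i then f (k l) else if l = j then g (k l) else (1 : ℝ))
      = ∏ l, ∑ x ∈ t l, (if l = i then f x else if l = j then g x else (1 : ℝ)) := h.symm
    _ = 0 := by
        apply Finset.prod_eq_zero (Finset.mem_univ i)
        simpa using hf

/-- Hertling's equality for Brieskorn–Pham polynomials: the `μ = Π(aᵢ−1)` spectral numbers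
`α_k = Σᵢ kᵢ/aᵢ` (with `1 ≤ kᵢ ≤ aᵢ−1`) have mean `n/2`, minimum `Σᵢ 1/aᵢ`, maximum
`Σᵢ (aᵢ−1)/aᵢ`, and their variance equals `(1/12)(α_max − α_min)`. -/
theorem stmt12 (n : ℕ) (hn : 1 ≤ n) (a : Fin n → ℕ) (ha : ∀ i, 2 ≤ a i)
    (μ : ℕ) (hμ : μ = ∏ i, (a i - 1))
    (K : Finset (Fin n → ℕ))
    (hK : K = Fintype.piFinset (fun i => Finset.Icc 1 (a i - 1)))
    (α : (Fin n → ℕ) → ℝ) (hα : ∀ k, α k = ∑ i, (k i : ℝ) / (a i)) :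
    K.card = μ ∧
    (1 / (μ : ℝ)) * ∑ k ∈ K, α k = (n : ℝ) / 2 ∧
    ((fun _ => 1) ∈ K) ∧ α (fun _ => 1) = ∑ i, (1 : ℝ) / (a i) ∧
    (∀ k ∈ K, ∑ i, (1 : ℝ) / (a i) ≤ α k) ∧
    ((fun i => a i - 1) ∈ K) ∧ α (fun i => a i - 1) = ∑ i, ((a i : ℝ) - 1) / (a i) ∧
    (∀ k ∈ K, α k ≤ ∑ i, ((a i : ℝ) - 1) / (a i)) ∧
    (1 / (μ : ℝ)) * ∑ k ∈ K, (α k - (n : ℝ) / 2) ^ 2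
      = (1 / 12) * (∑ i, ((a i : ℝ) - 1) / (a i) - ∑ i, (1 : ℝ) / (a i)) := by
  have hμpos : 0 < μ := by
    rw [hμ]; exact Finset.prod_pos fun i _ => by have := ha i; omega
  have hμne : (μ : ℝ) ≠ 0 := by exact_mod_cast hμpos.ne'
  have hapos : ∀ i, (0 : ℝ) < a i := fun i => by exact_mod_cast (by have := ha i; omega : 0 < a i)
  have hane : ∀ i, (a i : ℝ) ≠ 0 := fun i => (hapos i).ne'
  have hμR : ∀ i : Fin n, ((a i : ℝ) - 1)
      * ∏ j ∈ Finset.univ.erase i, ((Finset.Icc 1 (a j - 1)).card : ℝ) = (μ : ℝ) := by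
    intro i
    have : (μ : ℝ) = ∏ j, ((a j : ℝ) - 1) := by
      rw [hμ]; push_cast
      exact Finset.prod_congr rfl fun j _ => hmcast (ha j)
    rw [this, ← Finset.mul_prod_erase Finset.univ _ (Finset.mem_univ i)]
    congr 1
    exact Finset.prod_congr rfl fun j _ => by rw [cardIcc (ha j), hmcast (ha j)]
  -- card
  have hcard : K.card = μ := by
    rw [hK, Fintype.card_piFinset, hμ]
    exact Finset.prod_congr rfl fun i _ => cardIcc (ha i)
  refine ⟨hcard, ?_, ?_, ?_, ?_, ?_, ?_, ?_, ?_⟩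
  -- mean
  · have key : ∀ i : Fin n,
        ∑ k ∈ Fintype.piFinset (fun j => Finset.Icc 1 (a j - 1)), (k i : ℝ) / (a i)
          = (μ : ℝ) / 2 := by
      intro i
      have h := sum_pi_single (fun j => Finset.Icc 1 (a j - 1)) i (fun x => (x : ℝ) / (a i))
      rw [h, sum_div_a (ha i), div_mul_eq_mul_div, hμR i]
    calc (1 / (μ : ℝ)) * ∑ k ∈ K, α k
        = (1 / (μ : ℝ)) * ∑ i : Fin n, (μ : ℝ) / 2 := by
          rw [hK]
          congr 1
          rw [Finset.sum_congr rfl fun k _ => hα k, Finset.sum_comm]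
          exact Finset.sum_congr rfl fun i _ => key i
      _ = (n : ℝ) / 2 := by
          rw [Finset.sum_const, Finset.card_univ, Fintype.card_fin, nsmul_eq_mul]
          field_simp
  -- min membership
  · rw [hK, Fintype.mem_piFinset]
    intro i
    rw [Finset.mem_Icc]
    have := ha i; omega
  · rw [hα]; simp
  · intro k hk
    rw [hα]
    refine Finset.sum_le_sum fun i _ => ?_
    rw [hK, Fintype.mem_piFinset] at hk
    have h1 : 1 ≤ k i := (Finset.mem_Icc.1 (hk i)).1
    have : (1 : ℝ) ≤ (k i : ℝ) := by exact_mod_cast h1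
    exact div_le_div_of_nonneg_right this (hapos i).le |>.trans_eq rfl
  -- max membership
  · rw [hK, Fintype.mem_piFinset]
    intro i
    rw [Finset.mem_Icc]
    have := ha i; omega
  · rw [hα]
    exact Finset.sum_congr rfl fun i _ => by rw [hmcast (ha i)]
  · intro k hk
    rw [hα]
    refine Finset.sum_le_sum fun i _ => ?_
    rw [hK, Fintype.mem_piFinset] at hk
    have h1 : k i ≤ a i - 1 := (Finset.mem_Icc.1 (hk i)).2
    have : (k i : ℝ) ≤ (a i : ℝ) - 1 := by
      rw [← hmcast (ha i)]; exact_mod_cast h1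
    exact div_le_div_of_nonneg_right this (hapos i).le |>.trans_eq rfl
  -- variance
  · have hrw : ∀ k : Fin n → ℕ, α k - (n : ℝ) / 2 = ∑ i, ((k i : ℝ) / (a i) - 1 / 2) := by
      intro k
      rw [hα, Finset.sum_sub_distrib, Finset.sum_const, Finset.card_univ, Fintype.card_fin,
        nsmul_eq_mul]
      ring
    have hvar : ∑ k ∈ K, (α k - (n : ℝ) / 2) ^ 2
        = (μ : ℝ) * ∑ i, ((a i : ℝ) - 2) / (12 * (a i)) := by
      have step1 : ∑ k ∈ K, (α k - (n : ℝ) / 2) ^ 2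
          = ∑ k ∈ Fintype.piFinset (fun j => Finset.Icc 1 (a j - 1)), ∑ i, ∑ j,
              ((k i : ℝ) / (a i) - 1 / 2) * ((k j : ℝ) / (a j) - 1 / 2) := by
        rw [hK]
        refine Finset.sum_congr rfl fun k _ => ?_
        rw [hrw k, sq, Finset.sum_mul_sum]
      rw [step1, Finset.sum_comm, Finset.mul_sum]
      refine Finset.sum_congr rfl fun i _ => ?_
      rw [Finset.sum_comm, ← Finset.add_sum_erase _ _ (Finset.mem_univ i)]
      have hzero : ∑ j ∈ Finset.univ.erase i,
          ∑ k ∈ Fintype.piFinset (fun l => Finset.Icc 1 (a l - 1)),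
            ((k i : ℝ) / (a i) - 1 / 2) * ((k j : ℝ) / (a j) - 1 / 2) = 0 := by
        refine Finset.sum_eq_zero fun j hj => ?_
        exact sum_pi_two_zero _ (Finset.ne_of_mem_erase hj)
          (fun x => (x : ℝ) / (a i) - 1 / 2) (fun x => (x : ℝ) / (a j) - 1 / 2)
          (beta_sum_zero (ha i))
      rw [hzero, add_zero]
      have hdiag : ∑ k ∈ Fintype.piFinset (fun l => Finset.Icc 1 (a l - 1)),
          ((k i : ℝ) / (a i) - 1 / 2) * ((k i : ℝ) / (a i) - 1 / 2)
            = ∑ k ∈ Fintype.piFinset (fun l => Finset.Icc 1 (a l - 1)),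
              ((k i : ℝ) / (a i) - 1 / 2) ^ 2 :=
        Finset.sum_congr rfl fun k _ => (sq _).symm
      rw [hdiag,
        sum_pi_single (fun l => Finset.Icc 1 (a l - 1)) i (fun x => ((x : ℝ) / (a i) - 1 / 2) ^ 2),
        beta_sq_sum (ha i), ← hμR i]
      have := hane i
      ring
    rw [hvar, ← mul_assoc, one_div, inv_mul_cancel₀ hμne, one_mul,
      ← Finset.sum_sub_distrib, Finset.mul_sum]
    refine Finset.sum_congr rfl fun i _ => ?_
    have := hane i
    ring
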